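/- Let α, β ∈ ℝ with β ≠ 0, and let γ₀, …, γ_k ∈ ℝ. Suppose ξ₀, …, ξ_k satisfy ξ_{i+2} + 2α ξ_{i+1} + β ξᵢ = γᵢ for 0 ≤ i ≤ k-2, together with the terminal conditions ξ_{k-1} = (1/β)(γ_{k-1} - (2α/β)γ_k) and ξ_k = (1/β)γ_k. Then the polynomial y_d(t) = Σ_{i=0}^k ξᵢ tⁱ/i! satisfies y_d'' + 2α y_d' + β y_d = Σ_{i=0}^k γᵢ tⁱ/i! for all t ∈ ℝ. -/

import Mathlib

lemma key_hasDerivAt (n : ℕ) (c : ℕ → ℝ) (t : ℝ) :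
    HasDerivAt (fun t : ℝ => ∑ i ∈ Finset.range (n + 1), c i * t ^ i / (Nat.factorial i))
      (∑ i ∈ Finset.range n, c (i + 1) * t ^ i / (Nat.factorial i)) t := by
  have h : HasDerivAt (fun t : ℝ => ∑ i ∈ Finset.range (n + 1), c i * t ^ i / (Nat.factorial i))
      (∑ i ∈ Finset.range (n + 1), c i * (i * t ^ (i - 1)) / (Nat.factorial i)) t := by
    apply HasDerivAt.fun_sum
    intro i _
    have h0 := (hasDerivAt_pow i t).const_mul (c i / (Nat.factorial i : ℝ))
    have heq : (fun y : ℝ => c i / (Nat.factorial i : ℝ) * y ^ i)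
        = fun y : ℝ => c i * y ^ i / (Nat.factorial i : ℝ) := by
      funext y; ring
    rw [heq] at h0
    convert h0 using 1
    all_goals first | rfl | ring
  convert h using 1
  rw [Finset.sum_range_succ']
  simp only [Nat.factorial_succ, Nat.cast_mul, Nat.cast_add, Nat.cast_one, pow_zero,
    Nat.cast_zero, zero_mul, mul_zero, zero_div, add_zero, Nat.add_sub_cancel]
  apply Finset.sum_congr rfl
  intro i _
  have hfac : ((Nat.factorial i : ℝ)) ≠ 0 := Nat.cast_ne_zero.mpr (Nat.factorial_ne_zero i)
  field_simp

theorem stmt4 (α β : ℝ) (hβ : β ≠ 0) (k : ℕ) (hk : 1 ≤ k) (γ ξ : ℕ → ℝ)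
    (hrec : ∀ i : ℕ, i + 2 ≤ k → ξ (i + 2) + 2 * α * ξ (i + 1) + β * ξ i = γ i)
    (hterm1 : ξ (k - 1) = (1 / β) * (γ (k - 1) - (2 * α / β) * γ k))
    (hterm2 : ξ k = (1 / β) * γ k)
    (yd : ℝ → ℝ)
    (hyd : ∀ t : ℝ, yd t = ∑ i ∈ Finset.range (k + 1), ξ i * t ^ i / (Nat.factorial i)) :
    ∀ t : ℝ, deriv (deriv yd) t + 2 * α * deriv yd t + β * yd t
      = ∑ i ∈ Finset.range (k + 1), γ i * t ^ i / (Nat.factorial i) := by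
  have hyd' : yd = fun t => ∑ i ∈ Finset.range (k + 1), ξ i * t ^ i / (Nat.factorial i) :=
    funext hyd
  subst hyd'
  obtain ⟨m, rfl⟩ : ∃ m, k = m + 1 := ⟨k - 1, (Nat.succ_pred_eq_of_pos hk).symm⟩
  simp only [Nat.add_sub_cancel] at hterm1
  intro t
  have hd1 : deriv (fun t : ℝ => ∑ i ∈ Finset.range (m + 1 + 1), ξ i * t ^ i / (Nat.factorial i))
      = fun s : ℝ => ∑ i ∈ Finset.range (m + 1), ξ (i + 1) * s ^ i / (Nat.factorial i) :=
    funext fun s => (key_hasDerivAt (m + 1) ξ s).deriv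
  rw [hd1]
  rw [(key_hasDerivAt m (fun i => ξ (i + 1)) t).deriv]
  beta_reduce
  have h2' : β * ξ (m + 1) = γ (m + 1) := by rw [hterm2]; field_simp
  have h1' : 2 * α * ξ (m + 1) + β * ξ m = γ m := by
    rw [hterm1, hterm2]; field_simp; ring
  have main : ∑ i ∈ Finset.range m, ξ (i + 1 + 1) * t ^ i / (Nat.factorial i)
      + 2 * α * ∑ i ∈ Finset.range m, ξ (i + 1) * t ^ i / (Nat.factorial i)
      + β * ∑ i ∈ Finset.range m, ξ i * t ^ i / (Nat.factorial i)
      = ∑ i ∈ Finset.range m, γ i * t ^ i / (Nat.factorial i) := by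
    rw [Finset.mul_sum, Finset.mul_sum, add_assoc, ← Finset.sum_add_distrib,
      ← Finset.sum_add_distrib]
    apply Finset.sum_congr rfl
    intro i hi
    have hh := hrec i (by have := Finset.mem_range.mp hi; omega)
    have hfac : ((Nat.factorial i : ℝ)) ≠ 0 := Nat.cast_ne_zero.mpr (Nat.factorial_ne_zero i)
    field_simp
    linear_combination (t ^ i) * hh
  rw [Finset.sum_range_succ (fun i => ξ (i + 1) * t ^ i / (Nat.factorial i)),
    Finset.sum_range_succ (fun i => ξ i * t ^ i / (Nat.factorial i)) (m + 1),
    Finset.sum_range_succ (fun i => ξ i * t ^ i / (Nat.factorial i)) m,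
    Finset.sum_range_succ (fun i => γ i * t ^ i / (Nat.factorial i)) (m + 1),
    Finset.sum_range_succ (fun i => γ i * t ^ i / (Nat.factorial i)) m]
  linear_combination main + (t ^ m / (Nat.factorial m : ℝ)) * h1'
    + (t ^ (m + 1) / (Nat.factorial (m + 1) : ℝ)) * h2'
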